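/- Let a, b be real numbers with b ≠ 0, let Φ : ℝ² → ℝ be continuously differentiable near the origin with Φ(0,0) = 0, and let Ψ : ℝ² → ℝ be twice continuously differentiable near the origin with Ψ(0,0) = 0 and Ψ_u(0,0) = Ψ_v(0,0) = 0. Define λ₁ = −(1/2)·[Ψ_uu(0,0) − 2·(a/b)·Ψ_uv(0,0) + (a/b)²·Ψ_vv(0,0)], λ₂ = −(a/b)·[Φ_u(0,0) − (a/b)·Φ_v(0,0)], and ĥ(u,ε) = λ₁·u² + λ₂·u·ε. Then the invariance residual N(u,ε) := (∂ĥ/∂u)(u,ε)·ε·Φ(u, (ĥ(u,ε) − a·u)/b) − b·ĥ(u,ε) − a·ε·Φ(u, (ĥ(u,ε) − a·u)/b) − b·Ψ(u, (ĥ(u,ε) − a·u)/b) satisfies N(u,ε) = o(u² + ε²) as (u,ε) → (0,0). -/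

import Mathlib

open Topology Asymptotics


lemma taylor2 {E : Type*} [NormedAddCommGroup E] [NormedSpace ℝ E]
    {f : E → ℝ} (hf : ContDiffAt ℝ 2 f 0) (h0 : f 0 = 0)
    (h1 : fderiv ℝ f 0 = 0) :
    (fun h => f h - (1/2) * fderiv ℝ (fderiv ℝ f) 0 h h) =o[𝓝 (0:E)]
      fun h => ‖h‖^2 := by
  set f' := fderiv ℝ f with hf'
  set Q := fderiv ℝ f' 0 with hQdef
  have hsym : ∀ x y, Q x y = Q y x := hf.isSymmSndFDerivAt (by simp [minSmoothness_of_isRCLikeNormedField])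
  have hd1 : ContDiffAt ℝ 1 f' 0 := hf.fderiv_right le_rfl
  have hQ : HasFDerivAt f' Q 0 := (hd1.differentiableAt one_ne_zero).hasFDerivAt
  have hlo : (fun y => f' y - Q y) =o[𝓝 (0:E)] fun y => y := by
    have := hQ.isLittleO
    simpa [h1] using this.comp_tendsto (Filter.tendsto_id (α := E))
  obtain ⟨u, hu, hcd⟩ : ∃ u ∈ 𝓝 (0:E), ContDiffOn ℝ 2 f u := hf.contDiffOn le_rfl (by simp)
  obtain ⟨t, htu, hto, ht0⟩ := mem_nhds_iff.1 hu
  obtain ⟨r0, hr0, hball⟩ := Metric.isOpen_iff.1 hto 0 ht0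
  have hdiff : ∀ y ∈ Metric.ball (0:E) r0, HasFDerivAt f (f' y) y := by
    intro y hy
    have : ContDiffAt ℝ 2 f y := (hcd.mono htu).contDiffAt (hto.mem_nhds (hball hy))
    exact (this.differentiableAt two_ne_zero).hasFDerivAt
  have hquad : ∀ y : E, HasFDerivAt (fun x => (1/2) * Q x x) (Q y) y := by
    intro y
    have hb : IsBoundedBilinearMap ℝ (fun p : E × E => Q p.1 p.2) :=
      Q.isBoundedBilinearMap
    have hd : HasFDerivAt (fun x : E => Q x x)
        ((hb.deriv (y, y)).comp ((ContinuousLinearMap.id ℝ E).prod (ContinuousLinearMap.id ℝ E)))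
        y := by
      have hdiag : HasFDerivAt (fun x : E => (x, x))
          ((ContinuousLinearMap.id ℝ E).prod (ContinuousLinearMap.id ℝ E)) y :=
        (hasFDerivAt_id y).prodMk (hasFDerivAt_id y)
      exact HasFDerivAt.comp (g := fun p : E × E => Q p.1 p.2)
        (f := fun x : E => (x, x)) y (hb.hasFDerivAt (y, y)) hdiag
    have h2 := hd.const_mul (1/2)
    refine h2.congr_fderiv ?_
    ext h
    have := hb.deriv_apply (y, y) (h, h)
    simp only [ContinuousLinearMap.smul_apply, ContinuousLinearMap.comp_apply,
      ContinuousLinearMap.prod_apply, ContinuousLinearMap.coe_id', id_eq, this,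
      smul_eq_mul]
    have h2 := hsym y h
    linarith [hsym h y]
  have key : ∀ y ∈ Metric.ball (0:E) r0,
      HasFDerivAt (fun x => f x - (1/2) * Q x x) (f' y - Q y) y := fun y hy =>
    (hdiff y hy).sub (hquad y)
  rw [isLittleO_iff]
  intro c hc
  rw [isLittleO_iff] at hlo
  have hev := hlo hc
  rw [Metric.eventually_nhds_iff] at hev ⊢
  obtain ⟨r1, hr1, hb1⟩ := hev
  refine ⟨min r0 r1, lt_min hr0 hr1, fun {x} hx => ?_⟩
  simp only [dist_zero_right] at hx ⊢
  have hxr0 : ‖x‖ < r0 := lt_of_lt_of_le hx (min_le_left _ _)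
  have hxr1 : ‖x‖ < r1 := lt_of_lt_of_le hx (min_le_right _ _)
  have hsub : Metric.closedBall (0:E) ‖x‖ ⊆ Metric.ball 0 r0 := by
    intro y hy
    simp only [Metric.mem_closedBall, dist_zero_right] at hy
    exact Metric.mem_ball.2 (by simpa [dist_zero_right] using lt_of_le_of_lt hy hxr0)
  have hmvt := (convex_closedBall (0:E) ‖x‖).norm_image_sub_le_of_norm_hasFDerivWithin_le
    (f := fun x => f x - (1/2) * Q x x) (f' := fun y => f' y - Q y) (C := c * ‖x‖)
    (fun y hy => ((key y (hsub hy)).hasFDerivWithinAt))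
    (fun y hy => by
      have hy' : ‖y‖ ≤ ‖x‖ := by simpa [dist_zero_right] using hy
      have hyb : ‖f' y - Q y‖ ≤ c * ‖y‖ := by
        by_cases h : y = 0
        · simp [h, h1]
        · exact hb1 (by simpa [dist_zero_right] using lt_of_le_of_lt hy' hxr1)
      exact hyb.trans (by nlinarith [norm_nonneg y, norm_nonneg x, hc.le]))
    (show (0:E) ∈ Metric.closedBall (0:E) ‖x‖ from
      Metric.mem_closedBall_self (norm_nonneg x))
    (show x ∈ Metric.closedBall (0:E) ‖x‖ from
      Metric.mem_closedBall.2 (by simp [dist_zero_right]))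
  simp only [h0, map_zero, ContinuousLinearMap.zero_apply, mul_zero, sub_zero, sub_zero,
    zero_sub] at hmvt
  have : ‖f x - 1/2 * Q x x‖ ≤ c * ‖x‖ * ‖x‖ := by
    simpa [sub_zero] using hmvt
  calc ‖f x - 1/2 * Q x x‖ ≤ c * ‖x‖ * ‖x‖ := this
    _ = c * ‖‖x‖^2‖ := by rw [Real.norm_of_nonneg (by positivity : (0:ℝ) ≤ ‖x‖^2)]; ring
    _ ≤ c * ‖‖x‖^2‖ := le_rfl

lemma clm_eval {F : Type*} [NormedAddCommGroup F] [NormedSpace ℝ F]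
    (L : ℝ × ℝ →L[ℝ] F) (x y : ℝ) : L (x, y) = x • L (1, 0) + y • L (0, 1) := by
  have h : ((x, y) : ℝ × ℝ) = x • ((1:ℝ), (0:ℝ)) + y • ((0:ℝ), (1:ℝ)) := by
    simp [Prod.ext_iff]
  rw [h, map_add, map_smul, map_smul]

lemma cube_littleO : (fun p : ℝ × ℝ => ‖p‖^3) =o[𝓝 (0 : ℝ × ℝ)] fun p => ‖p‖^2 := by
  have h1 : (fun p : ℝ × ℝ => ‖p‖^3) = fun p => ‖p‖^2 * ‖p‖ := by
    funext p; ring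
  rw [h1]
  have h2 : (fun p : ℝ × ℝ => ‖p‖) =o[𝓝 (0 : ℝ × ℝ)] fun _ => (1:ℝ) := by
    rw [isLittleO_one_iff]
    simpa using (continuous_norm (E := ℝ × ℝ)).tendsto 0
  have := (isBigO_refl (fun p : ℝ × ℝ => ‖p‖^2) (𝓝 (0 : ℝ × ℝ))).mul_isLittleO h2
  simpa using this

lemma ev_cube_littleO {f : ℝ × ℝ → ℝ} {C : ℝ}
    (h : ∀ᶠ p in 𝓝 (0 : ℝ × ℝ), |f p| ≤ C * ‖p‖^3) :
    f =o[𝓝 (0 : ℝ × ℝ)] fun p => ‖p‖^2 := by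
  refine IsBigO.trans_isLittleO ?_ cube_littleO
  rw [isBigO_iff]
  exact ⟨C, by filter_upwards [h] with p hp; simpa [abs_of_nonneg (pow_nonneg (norm_nonneg p) 3)] using hp⟩

lemma clm2_eval (Q : ℝ × ℝ →L[ℝ] ℝ × ℝ →L[ℝ] ℝ) (x y z w : ℝ) :
    Q (x, y) (z, w) = x * z * Q (1, 0) (1, 0) + x * w * Q (1, 0) (0, 1)
      + y * z * Q (0, 1) (1, 0) + y * w * Q (0, 1) (0, 1) := by
  rw [clm_eval Q x y]
  simp only [ContinuousLinearMap.add_apply, ContinuousLinearMap.smul_apply, smul_eq_mul]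
  rw [clm_eval (Q (1, 0)) z w, clm_eval (Q (0, 1)) z w]
  simp only [smul_eq_mul]
  ring

set_option maxHeartbeats 8000000 in
/-- The second-order polynomial `ĥ(u,ε) = λ₁ u² + λ₂ u ε` annihilates the
center-manifold invariance residual of the general slow–fast system up to
`o(u² + ε²)` as `(u,ε) → (0,0)`. -/
theorem stmt_2 (a b : ℝ) (hb : b ≠ 0)
    (Φ Ψ : ℝ × ℝ → ℝ)
    (hΦ : ContDiffAt ℝ 1 Φ (0, 0)) (hΦ0 : Φ (0, 0) = 0)
    (hΨ : ContDiffAt ℝ 2 Ψ (0, 0)) (hΨ0 : Ψ (0, 0) = 0)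
    (hΨu : fderiv ℝ Ψ (0, 0) (1, 0) = 0)
    (hΨv : fderiv ℝ Ψ (0, 0) (0, 1) = 0)
    (lam1 lam2 : ℝ)
    (hlam1 : lam1 = -(1 / 2) *
      (fderiv ℝ (fun p => fderiv ℝ Ψ p (1, 0)) (0, 0) (1, 0)
        - 2 * (a / b) * fderiv ℝ (fun p => fderiv ℝ Ψ p (1, 0)) (0, 0) (0, 1)
        + (a / b) ^ 2 * fderiv ℝ (fun p => fderiv ℝ Ψ p (0, 1)) (0, 0) (0, 1)))
    (hlam2 : lam2 = -(a / b) *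
      (fderiv ℝ Φ (0, 0) (1, 0) - (a / b) * fderiv ℝ Φ (0, 0) (0, 1)))
    (hhat : ℝ → ℝ → ℝ)
    (hhhat : ∀ u ε, hhat u ε = lam1 * u ^ 2 + lam2 * u * ε)
    (N : ℝ → ℝ → ℝ)
    (hN : ∀ u ε, N u ε =
      deriv (fun x => hhat x ε) u * (ε * Φ (u, (hhat u ε - a * u) / b))
        - b * hhat u ε
        - a * ε * Φ (u, (hhat u ε - a * u) / b)
        - b * Ψ (u, (hhat u ε - a * u) / b)) :
    (fun p : ℝ × ℝ => N p.1 p.2) =o[𝓝 ((0 : ℝ), (0 : ℝ))]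
      (fun p : ℝ × ℝ => p.1 ^ 2 + p.2 ^ 2) := by
  have h00 : ((0 : ℝ), (0 : ℝ)) = (0 : ℝ × ℝ) := rfl
  rw [h00] at hΦ hΦ0 hΨ hΨ0 hΨu hΨv hlam1 hlam2 ⊢
  have hb' : (0 : ℝ) < |b| := abs_pos.2 hb
  -- abbreviations
  set L := fderiv ℝ Φ (0 : ℝ × ℝ) with hLdef
  set Q := fderiv ℝ (fderiv ℝ Ψ) (0 : ℝ × ℝ) with hQdef
  set m : ℝ × ℝ → ℝ × ℝ :=
    fun p => (p.1, (lam1 * p.1 ^ 2 + lam2 * p.1 * p.2 - a * p.1) / b) with hm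
  set ρ : ℝ × ℝ → ℝ := fun p => (lam1 * p.1 ^ 2 + lam2 * p.1 * p.2) / b with hρ
  -- first derivative of Ψ vanishes
  have hΨ1 : fderiv ℝ Ψ (0 : ℝ × ℝ) = 0 := by
    refine ContinuousLinearMap.ext fun x => ?_
    obtain ⟨x1, x2⟩ := x
    rw [clm_eval, hΨu, hΨv]
    simp
  -- second derivative swap
  have hc2 : DifferentiableAt ℝ (fderiv ℝ Ψ) (0 : ℝ × ℝ) :=
    (hΨ.fderiv_right (m := 1) le_rfl).differentiableAt one_ne_zero
  have hQswap : ∀ v w : ℝ × ℝ, fderiv ℝ (fun p => fderiv ℝ Ψ p v) (0 : ℝ × ℝ) w = Q w v := by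
    intro v w
    have h := fderiv_clm_apply (𝕜 := ℝ) (c := fderiv ℝ Ψ) (u := fun _ => v)
      (x := (0 : ℝ × ℝ)) hc2 (differentiableAt_const v)
    simp only [fderiv_fun_const, Pi.zero_apply, ContinuousLinearMap.comp_zero, zero_add] at h
    rw [h]
    simp [ContinuousLinearMap.flip_apply, hQdef]
  have hsym : ∀ v w : ℝ × ℝ, Q v w = Q w v := hΨ.isSymmSndFDerivAt (by simp [minSmoothness_of_isRCLikeNormedField])
  -- rewrite lam1 in terms of Q
  rw [hQswap, hQswap, hQswap] at hlam1
  -- the derivative of hhat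
  have hderiv : ∀ u ε : ℝ, deriv (fun x => hhat x ε) u = 2 * lam1 * u + lam2 * ε := by
    intro u ε
    have hfe : (fun x => hhat x ε) = fun x => lam1 * x ^ 2 + lam2 * x * ε :=
      funext fun x => hhhat x ε
    rw [hfe]
    have h1 : HasDerivAt (fun x : ℝ => lam1 * x ^ 2 + lam2 * x * ε)
        (lam1 * (↑2 * u ^ 1) + lam2 * 1 * ε) u :=
      ((hasDerivAt_pow 2 u).const_mul lam1).add
        (((hasDerivAt_id u).const_mul lam2).mul_const ε)
    rw [h1.deriv]; push_cast; ring
  -- m tends to 0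
  have hmcont : Continuous m := by
    rw [hm]; fun_prop
  have hmt : Filter.Tendsto m (𝓝 (0 : ℝ × ℝ)) (𝓝 (0 : ℝ × ℝ)) := by
    have h0 : m 0 = 0 := by simp [hm]
    simpa [h0] using hmcont.tendsto (0 : ℝ × ℝ)
  -- m is O(p)
  have hmO : m =O[𝓝 (0 : ℝ × ℝ)] (fun p : ℝ × ℝ => p) := by
    rw [isBigO_iff]
    refine ⟨1 + (|lam1| + |lam2| + |a|) / |b|, ?_⟩
    filter_upwards [Metric.closedBall_mem_nhds (0 : ℝ × ℝ) one_pos] with p hp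
    simp only [Metric.mem_closedBall, dist_zero_right] at hp
    have hu : |p.1| ≤ ‖p‖ := by
      simpa [Real.norm_eq_abs] using norm_fst_le p
    have hε : |p.2| ≤ ‖p‖ := by
      simpa [Real.norm_eq_abs] using norm_snd_le p
    have hnum : |lam1 * p.1 ^ 2 + lam2 * p.1 * p.2 - a * p.1|
        ≤ (|lam1| + |lam2| + |a|) * ‖p‖ := by
      calc |lam1 * p.1 ^ 2 + lam2 * p.1 * p.2 - a * p.1|
          ≤ |lam1 * p.1 ^ 2| + |lam2 * p.1 * p.2| + |a * p.1| := abs_sub _ _ |>.trans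
            (add_le_add_left (abs_add_le _ _) _)
        _ = |lam1| * (|p.1| * |p.1|) + |lam2| * (|p.1| * |p.2|) + |a| * |p.1| := by
            simp only [abs_mul, abs_pow]; ring
        _ ≤ (|lam1| + |lam2| + |a|) * ‖p‖ := by
            have h1 : |p.1| * |p.1| ≤ ‖p‖ := by nlinarith [abs_nonneg p.1, norm_nonneg p]
            have h2 : |p.1| * |p.2| ≤ ‖p‖ := by
              nlinarith [abs_nonneg p.1, abs_nonneg p.2, norm_nonneg p]
            have e1 := mul_le_mul_of_nonneg_left h1 (abs_nonneg lam1)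
            have e2 := mul_le_mul_of_nonneg_left h2 (abs_nonneg lam2)
            have e3 := mul_le_mul_of_nonneg_left hu (abs_nonneg a)
            linarith
    rw [hm]
    rw [Prod.norm_def]
    simp only [Real.norm_eq_abs]
    apply max_le
    · calc |p.1| ≤ ‖p‖ := hu
        _ ≤ (1 + (|lam1| + |lam2| + |a|) / |b|) * ‖p‖ := by
            nlinarith [norm_nonneg p, abs_nonneg lam1, abs_nonneg lam2, abs_nonneg a,
              div_nonneg (by positivity : (0:ℝ) ≤ |lam1| + |lam2| + |a|) (abs_nonneg b)]
    · rw [abs_div]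
      rw [div_le_iff₀ hb']
      calc |lam1 * p.1 ^ 2 + lam2 * p.1 * p.2 - a * p.1|
          ≤ (|lam1| + |lam2| + |a|) * ‖p‖ := hnum
        _ ≤ (1 + (|lam1| + |lam2| + |a|) / |b|) * ‖p‖ * |b| := by
            have hRHS : (1 + (|lam1| + |lam2| + |a|) / |b|) * ‖p‖ * |b|
                = ‖p‖ * |b| + (|lam1| + |lam2| + |a|) * ‖p‖ := by
              field_simp
            rw [hRHS]
            nlinarith [mul_nonneg (norm_nonneg p) hb'.le]
  -- ρ is O(‖p‖²)
  have hρO : ρ =O[𝓝 (0 : ℝ × ℝ)] (fun p : ℝ × ℝ => ‖p‖ ^ 2) := by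
    rw [isBigO_iff]
    refine ⟨(|lam1| + |lam2|) / |b|, Filter.Eventually.of_forall fun p => ?_⟩
    have hu : |p.1| ≤ ‖p‖ := by simpa [Real.norm_eq_abs] using norm_fst_le p
    have hε : |p.2| ≤ ‖p‖ := by simpa [Real.norm_eq_abs] using norm_snd_le p
    rw [hρ]
    simp only [Real.norm_eq_abs, abs_div]
    rw [div_le_iff₀ hb', abs_of_nonneg (by positivity : (0:ℝ) ≤ ‖p‖ ^ 2)]
    calc |lam1 * p.1 ^ 2 + lam2 * p.1 * p.2|
        ≤ |lam1| * (|p.1| * |p.1|) + |lam2| * (|p.1| * |p.2|) := by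
          refine (abs_add_le _ _).trans ?_
          simp only [abs_mul, abs_pow]
          apply le_of_eq; ring
      _ ≤ (|lam1| + |lam2|) * ‖p‖ ^ 2 := by
          have h1 : |p.1| * |p.1| ≤ ‖p‖ ^ 2 := by nlinarith [abs_nonneg p.1, norm_nonneg p]
          have h2 : |p.1| * |p.2| ≤ ‖p‖ ^ 2 := by
            nlinarith [abs_nonneg p.1, abs_nonneg p.2, norm_nonneg p]
          have e1 := mul_le_mul_of_nonneg_left h1 (abs_nonneg lam1)
          have e2 := mul_le_mul_of_nonneg_left h2 (abs_nonneg lam2)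
          linarith
      _ = (|lam1| + |lam2|) / |b| * ‖p‖ ^ 2 * |b| := by field_simp

  -- make the set-bound atoms opaque from here on
  have hmval : ∀ p : ℝ × ℝ,
      m p = (p.1, (lam1 * p.1 ^ 2 + lam2 * p.1 * p.2 - a * p.1) / b) := fun _ => rfl
  have hΦd : HasFDerivAt Φ L (0 : ℝ × ℝ) := (hΦ.differentiableAt one_ne_zero).hasFDerivAt
  have hT : (fun q : ℝ × ℝ => Ψ q - 1 / 2 * Q q q) =o[𝓝 (0 : ℝ × ℝ)] fun q => ‖q‖ ^ 2 :=
    taylor2 hΨ hΨ0 hΨ1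
  clear_value L Q m ρ
  -- Φ expansions
  have hΦlo : (fun q : ℝ × ℝ => Φ q - L q) =o[𝓝 (0 : ℝ × ℝ)] fun q => q := by
    have h := hΦd.isLittleO
    simpa [hΦ0] using h
  have hΦm : (fun p => Φ (m p) - L (m p)) =o[𝓝 (0 : ℝ × ℝ)] fun p => ‖p‖ :=
    ((hΦlo.comp_tendsto hmt).trans_isBigO hmO).norm_right
  have hφt : Filter.Tendsto (fun p => Φ (m p)) (𝓝 (0 : ℝ × ℝ)) (𝓝 0) := by
    have h := hΦ.continuousAt.tendsto.comp hmt
    simpa [hΦ0, Function.comp_def] using h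
  have hφo1 : (fun p => Φ (m p)) =o[𝓝 (0 : ℝ × ℝ)] fun _ => (1 : ℝ) :=
    (isLittleO_one_iff ℝ).2 hφt
  have hnorm_o : (fun p : ℝ × ℝ => ‖p‖) =o[𝓝 (0 : ℝ × ℝ)] fun _ => (1 : ℝ) := by
    rw [isLittleO_one_iff]
    simpa using (continuous_norm (E := ℝ × ℝ)).tendsto 0
  have hsq : (fun p : ℝ × ℝ => ‖p‖ ^ 2) =o[𝓝 (0 : ℝ × ℝ)] fun p => ‖p‖ := by
    have h := (isBigO_refl (fun p : ℝ × ℝ => ‖p‖) (𝓝 (0 : ℝ × ℝ))).mul_isLittleO hnorm_o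
    simpa [pow_two] using h
  -- piece A
  have hcoefA : (fun p : ℝ × ℝ => (2 * lam1 * p.1 + lam2 * p.2) * p.2)
      =O[𝓝 (0 : ℝ × ℝ)] fun p => ‖p‖ ^ 2 := by
    rw [isBigO_iff]
    refine ⟨2 * |lam1| + |lam2|, Filter.Eventually.of_forall fun p => ?_⟩
    have hu : |p.1| ≤ ‖p‖ := by simpa [Real.norm_eq_abs] using norm_fst_le p
    have hε : |p.2| ≤ ‖p‖ := by simpa [Real.norm_eq_abs] using norm_snd_le p
    simp only [Real.norm_eq_abs]
    rw [abs_of_nonneg (by positivity : (0:ℝ) ≤ ‖p‖ ^ 2)]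
    have h3 : |2 * lam1 * p.1 + lam2 * p.2| ≤ 2 * |lam1| * ‖p‖ + |lam2| * ‖p‖ := by
      refine (abs_add_le _ _).trans ?_
      simp only [abs_mul, abs_two]
      have e1 := mul_le_mul_of_nonneg_left hu (by positivity : (0:ℝ) ≤ 2 * |lam1|)
      have e2 := mul_le_mul_of_nonneg_left hε (abs_nonneg lam2)
      linarith
    calc |(2 * lam1 * p.1 + lam2 * p.2) * p.2|
        = |2 * lam1 * p.1 + lam2 * p.2| * |p.2| := abs_mul _ _
      _ ≤ (2 * |lam1| * ‖p‖ + |lam2| * ‖p‖) * ‖p‖ :=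
          mul_le_mul h3 hε (abs_nonneg _) (by positivity)
      _ = (2 * |lam1| + |lam2|) * ‖p‖ ^ 2 := by ring
  have hA : (fun p : ℝ × ℝ => ((2 * lam1 * p.1 + lam2 * p.2) * p.2) * Φ (m p))
      =o[𝓝 (0 : ℝ × ℝ)] fun p => ‖p‖ ^ 2 := by
    simpa using hcoefA.mul_isLittleO hφo1
  -- piece B
  have hEeq : ∀ p : ℝ × ℝ, Φ (m p) - (L (1, 0) * p.1 - (a / b) * L (0, 1) * p.1)
      = (Φ (m p) - L (m p)) + ρ p * L (0, 1) := by
    intro p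
    have hmp := hmval p
    rw [hmp, clm_eval L p.1 ((lam1 * p.1 ^ 2 + lam2 * p.1 * p.2 - a * p.1) / b)]
    simp only [hρ, smul_eq_mul, div_eq_mul_inv]
    ring
  have hE : (fun p : ℝ × ℝ => Φ (m p) - (L (1, 0) * p.1 - (a / b) * L (0, 1) * p.1))
      =o[𝓝 (0 : ℝ × ℝ)] fun p => ‖p‖ := by
    have h2 : (fun p : ℝ × ℝ => ρ p * L (0, 1)) =o[𝓝 (0 : ℝ × ℝ)] fun p => ‖p‖ := by
      have hb2 : (fun p : ℝ × ℝ => ρ p * L (0, 1)) =O[𝓝 (0 : ℝ × ℝ)] fun p => ‖p‖ ^ 2 := by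
        have h := hρO.const_mul_left (L (0, 1))
        exact h.congr_left fun p => mul_comm _ _
      exact hb2.trans_isLittleO hsq
    have h := hΦm.add h2
    exact h.congr' (Filter.Eventually.of_forall fun p => (hEeq p).symm)
      (Filter.EventuallyEq.refl _ _)
  have h_aε : (fun p : ℝ × ℝ => -(a * p.2)) =O[𝓝 (0 : ℝ × ℝ)] fun p => ‖p‖ := by
    rw [isBigO_iff]
    refine ⟨|a|, Filter.Eventually.of_forall fun p => ?_⟩
    have hε : |p.2| ≤ ‖p‖ := by simpa [Real.norm_eq_abs] using norm_snd_le p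
    simp only [Real.norm_eq_abs, abs_neg, abs_mul]
    rw [abs_of_nonneg (norm_nonneg p)]
    exact mul_le_mul_of_nonneg_left hε (abs_nonneg a)
  have hB : (fun p : ℝ × ℝ =>
      (-(a * p.2)) * (Φ (m p) - (L (1, 0) * p.1 - (a / b) * L (0, 1) * p.1)))
      =o[𝓝 (0 : ℝ × ℝ)] fun p => ‖p‖ ^ 2 := by
    have h := h_aε.mul_isLittleO hE
    simpa [pow_two] using h
  -- piece C
  have hmnormO : (fun p => ‖m p‖ ^ 2) =O[𝓝 (0 : ℝ × ℝ)] fun p => ‖p‖ ^ 2 :=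
    hmO.norm_norm.pow 2
  have hT1 : (fun p => Ψ (m p) - 1 / 2 * Q (m p) (m p)) =o[𝓝 (0 : ℝ × ℝ)]
      fun p => ‖p‖ ^ 2 :=
    (hT.comp_tendsto hmt).trans_isBigO hmnormO
  have hθt : Filter.Tendsto (fun p : ℝ × ℝ =>
      Q (0, 1) (1, 0) * p.1 + (-(a / b) * p.1 + 1 / 2 * ρ p) * Q (0, 1) (0, 1))
      (𝓝 (0 : ℝ × ℝ)) (𝓝 0) := by
    have hc : Continuous (fun p : ℝ × ℝ =>
        Q (0, 1) (1, 0) * p.1 + (-(a / b) * p.1 + 1 / 2 * ρ p) * Q (0, 1) (0, 1)) := by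
      simp only [hρ]; fun_prop
    have h := hc.tendsto 0
    simpa [hρ] using h
  have hθo : (fun p : ℝ × ℝ =>
      Q (0, 1) (1, 0) * p.1 + (-(a / b) * p.1 + 1 / 2 * ρ p) * Q (0, 1) (0, 1))
      =o[𝓝 (0 : ℝ × ℝ)] fun _ => (1 : ℝ) := (isLittleO_one_iff ℝ).2 hθt
  have hReq : ∀ p : ℝ × ℝ, 1 / 2 * Q (m p) (m p) + lam1 * p.1 ^ 2
      = ρ p * (Q (0, 1) (1, 0) * p.1 + (-(a / b) * p.1 + 1 / 2 * ρ p) * Q (0, 1) (0, 1)) := by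
    intro p
    have hmp := hmval p
    rw [hmp, clm2_eval]
    have hsw : Q (1, 0) (0, 1) = Q (0, 1) (1, 0) := hsym _ _
    rw [hsw]
    simp only [hρ]
    linear_combination (p.1 ^ 2) * hlam1
  have hR : (fun p : ℝ × ℝ => 1 / 2 * Q (m p) (m p) + lam1 * p.1 ^ 2)
      =o[𝓝 (0 : ℝ × ℝ)] fun p => ‖p‖ ^ 2 := by
    have h := hρO.mul_isLittleO hθo
    have h' : (fun p : ℝ × ℝ => ρ p *
        (Q (0, 1) (1, 0) * p.1 + (-(a / b) * p.1 + 1 / 2 * ρ p) * Q (0, 1) (0, 1)))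
        =o[𝓝 (0 : ℝ × ℝ)] fun p => ‖p‖ ^ 2 := by simpa using h
    exact h'.congr' (Filter.Eventually.of_forall fun p => (hReq p).symm)
      (Filter.EventuallyEq.refl _ _)
  have hC : (fun p : ℝ × ℝ => (-b) * (Ψ (m p) + lam1 * p.1 ^ 2))
      =o[𝓝 (0 : ℝ × ℝ)] fun p => ‖p‖ ^ 2 := by
    have h := (hT1.add hR).const_mul_left (-b)
    exact h.congr' (Filter.Eventually.of_forall fun p => by ring)
      (Filter.EventuallyEq.refl _ _)
  -- comparison of gauges
  have hfin : (fun p : ℝ × ℝ => ‖p‖ ^ 2) =O[𝓝 (0 : ℝ × ℝ)] fun p => p.1 ^ 2 + p.2 ^ 2 := by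
    rw [isBigO_iff]
    refine ⟨1, Filter.Eventually.of_forall fun p => ?_⟩
    simp only [Real.norm_eq_abs, one_mul]
    rw [abs_of_nonneg (by positivity : (0:ℝ) ≤ ‖p‖ ^ 2),
      abs_of_nonneg (by positivity : (0:ℝ) ≤ p.1 ^ 2 + p.2 ^ 2)]
    rw [Prod.norm_def]
    simp only [Real.norm_eq_abs]
    rcases le_total |p.1| |p.2| with h | h
    · rw [max_eq_right h]
      nlinarith [sq_nonneg p.1, sq_abs p.2]
    · rw [max_eq_left h]
      nlinarith [sq_nonneg p.2, sq_abs p.1]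
  -- assemble
  have hNsum : (fun p : ℝ × ℝ => N p.1 p.2) = fun p : ℝ × ℝ =>
      ((2 * lam1 * p.1 + lam2 * p.2) * p.2) * Φ (m p)
      + (-(a * p.2)) * (Φ (m p) - (L (1, 0) * p.1 - (a / b) * L (0, 1) * p.1))
      + (-b) * (Ψ (m p) + lam1 * p.1 ^ 2) := by
    have hblam2 : b * lam2 = -a * L (1, 0) + a * (a / b) * L (0, 1) := by
      rw [hlam2]; field_simp; ring
    funext p
    rw [hN, hderiv]
    simp only [hhhat]
    rw [← hmval p]
    linear_combination (-(p.1 * p.2)) * hblam2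
  rw [hNsum]
  exact ((hA.add hB).add hC).trans_isBigO hfin
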